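/- Let Ω̂ ⊆ ℝ³ be a measurable set, let F : ℝ³ → ℝ³ be twice continuously differentiable, injective on Ω̂, with det(DF(x̂)) > 0 for all x̂ ∈ Ω̂, and let u, v : ℝ³ → ℝ³ be continuously differentiable. Define the covariant Piola pullbacks û(x̂) = (DF(x̂))ᵀ u(F(x̂)) and v̂(x̂) = (DF(x̂))ᵀ v(F(x̂)). Then ∫_{F(Ω̂)} ⟨(∇ × u)(x), (∇ × v)(x)⟩ dx = ∫_{Ω̂} (1 / det(DF(x̂))) ⟨DF(x̂) (∇ × û)(x̂), DF(x̂) (∇ × v̂)(x̂)⟩ dx̂, where ∇ × w denotes the curl of a vector field w : ℝ³ → ℝ³, ⟨·,·⟩ is the Euclidean inner product, and integration is with respect to Lebesgue measure. -/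

import Mathlib

open MeasureTheory

/-- Jacobian matrix of a map `F : ℝ³ → ℝ³` at a point. -/
noncomputable def jacobian3 (F : (Fin 3 → ℝ) → (Fin 3 → ℝ)) (x : Fin 3 → ℝ) :
    Matrix (Fin 3) (Fin 3) ℝ :=
  Matrix.of fun i j => fderiv ℝ F x (Pi.single j 1) i

/-- Partial derivative of a scalar function in the j-th coordinate direction. -/
noncomputable def pderiv3 (g : (Fin 3 → ℝ) → ℝ) (j : Fin 3) (x : Fin 3 → ℝ) : ℝ :=
  fderiv ℝ g x (Pi.single j 1)

/-- Curl of a vector field in ℝ³: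
∇ × v = (∂₂v₃ − ∂₃v₂, ∂₃v₁ − ∂₁v₃, ∂₁v₂ − ∂₂v₁). -/
noncomputable def curl3 (v : (Fin 3 → ℝ) → (Fin 3 → ℝ)) (x : Fin 3 → ℝ) : Fin 3 → ℝ :=
  ![pderiv3 (fun y => v y 2) 1 x - pderiv3 (fun y => v y 1) 2 x,
    pderiv3 (fun y => v y 0) 2 x - pderiv3 (fun y => v y 2) 0 x,
    pderiv3 (fun y => v y 1) 0 x - pderiv3 (fun y => v y 0) 1 x]

abbrev E3 := Fin 3 → ℝ

lemma clm_apply_eq_sum (φ : E3 →L[ℝ] E3) (v : E3) (k : Fin 3) :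
    φ v k = ∑ l, v l * φ (Pi.single l 1) k := by
  have hv : v = ∑ l : Fin 3, v l • (Pi.single l 1 : E3) := by
    funext m
    simp [Finset.sum_apply, Pi.single_apply]
  conv_lhs => rw [hv]
  rw [map_sum]
  simp [Finset.sum_apply, smul_eq_mul]

lemma sderiv_symm (F : E3 → E3) (hF : ContDiff ℝ 2 F) (x : E3) (i j k : Fin 3) :
    fderiv ℝ (fun y => fderiv ℝ F y (Pi.single i 1) k) x (Pi.single j 1)
      = fderiv ℝ (fun y => fderiv ℝ F y (Pi.single j 1) k) x (Pi.single i 1) := by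
  have hd1 : ∀ y, HasFDerivAt F (fderiv ℝ F y) y := fun y =>
    ((hF.differentiable (by norm_num)) y).hasFDerivAt
  have hC1 : ContDiff ℝ 1 (fderiv ℝ F) := by
    exact hF.fderiv_right (by norm_num)
  have hd2 : HasFDerivAt (fderiv ℝ F) (fderiv ℝ (fderiv ℝ F) x) x :=
    ((hC1.differentiable (by norm_num)) x).hasFDerivAt
  have hsymm := second_derivative_symmetric hd1 hd2 (Pi.single i 1) (Pi.single j 1)
  have key : ∀ a : Fin 3, (fderiv ℝ (fun y => fderiv ℝ F y (Pi.single a 1) k) x)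
      = ((ContinuousLinearMap.proj (R := ℝ) (φ := fun _ : Fin 3 => ℝ) k).comp
          (ContinuousLinearMap.apply ℝ E3 (Pi.single a 1))).comp (fderiv ℝ (fderiv ℝ F) x) := by
    intro a
    have := (((ContinuousLinearMap.proj (R := ℝ) (φ := fun _ : Fin 3 => ℝ) k).comp
        (ContinuousLinearMap.apply ℝ E3 (Pi.single a 1))).hasFDerivAt.comp x hd2)
    exact this.fderiv
  rw [key i, key j]
  simpa using congrArg (fun z => z k) hsymm.symm


lemma fderiv_entry_eq (F : E3 → E3) (hF : ContDiff ℝ 2 F) (x : E3) (i k : Fin 3) :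
    fderiv ℝ (fun y => fderiv ℝ F y (Pi.single i 1) k) x
      = ((ContinuousLinearMap.proj (R := ℝ) (φ := fun _ : Fin 3 => ℝ) k).comp
          (ContinuousLinearMap.apply ℝ E3 (Pi.single i 1))).comp (fderiv ℝ (fderiv ℝ F) x) := by
  have hC1 : ContDiff ℝ 1 (fderiv ℝ F) := hF.fderiv_right (by norm_num)
  have hd2 : HasFDerivAt (fderiv ℝ F) (fderiv ℝ (fderiv ℝ F) x) x :=
    ((hC1.differentiable (by norm_num)) x).hasFDerivAt
  exact (((ContinuousLinearMap.proj (R := ℝ) (φ := fun _ : Fin 3 => ℝ) k).comp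
      (ContinuousLinearMap.apply ℝ E3 (Pi.single i 1))).hasFDerivAt.comp x hd2).fderiv

lemma pderiv3_uhat (F : E3 → E3) (hF : ContDiff ℝ 2 F) (u : E3 → E3) (hu : ContDiff ℝ 1 u)
    (uhat : E3 → E3) (huhat : ∀ x, uhat x = (jacobian3 F x).transpose.mulVec (u (F x)))
    (x : E3) (i j : Fin 3) :
    pderiv3 (fun y => uhat y i) j x
      = (∑ k, fderiv ℝ (fun y => fderiv ℝ F y (Pi.single i 1) k) x (Pi.single j 1) * u (F x) k)
      + ∑ k, ∑ l, fderiv ℝ F x (Pi.single i 1) k *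
          (fderiv ℝ u (F x) (Pi.single l 1) k * fderiv ℝ F x (Pi.single j 1) l) := by
  have hd1 : ∀ y, HasFDerivAt F (fderiv ℝ F y) y := fun y =>
    ((hF.differentiable (by norm_num)) y).hasFDerivAt
  have hC1 : ContDiff ℝ 1 (fderiv ℝ F) := hF.fderiv_right (by norm_num)
  have hd2 : HasFDerivAt (fderiv ℝ F) (fderiv ℝ (fderiv ℝ F) x) x :=
    ((hC1.differentiable (by norm_num)) x).hasFDerivAt
  have hfun : (fun y => uhat y i)
      = fun y => ∑ k : Fin 3, fderiv ℝ F y (Pi.single i 1) k * u (F y) k := by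
    funext y
    rw [huhat]
    simp [jacobian3, Matrix.mulVec, dotProduct, Matrix.transpose_apply]
  set C1 : Fin 3 → (E3 →L[ℝ] ℝ) := fun k =>
    ((ContinuousLinearMap.proj (R := ℝ) (φ := fun _ : Fin 3 => ℝ) k).comp
      (ContinuousLinearMap.apply ℝ E3 (Pi.single i 1))).comp (fderiv ℝ (fderiv ℝ F) x) with hC1def
  set C2 : Fin 3 → (E3 →L[ℝ] ℝ) := fun k =>
    ((ContinuousLinearMap.proj (R := ℝ) (φ := fun _ : Fin 3 => ℝ) k).comp
      (fderiv ℝ u (F x))).comp (fderiv ℝ F x) with hC2def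
  have h1 : ∀ k, HasFDerivAt (fun y => fderiv ℝ F y (Pi.single i 1) k) (C1 k) x := fun k => by
    exact
      (((ContinuousLinearMap.proj (R := ℝ) (φ := fun _ : Fin 3 => ℝ) k).comp
        (ContinuousLinearMap.apply ℝ E3 (Pi.single i 1))).hasFDerivAt.comp x hd2)
  have h2 : ∀ k, HasFDerivAt (fun y => u (F y) k) (C2 k) x := fun k =>
    (((ContinuousLinearMap.proj (R := ℝ) (φ := fun _ : Fin 3 => ℝ) k).hasFDerivAt.comp (F x)
      ((hu.differentiable (by norm_num) (F x)).hasFDerivAt)).comp x (hd1 x))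
  have H : HasFDerivAt (fun y => ∑ k : Fin 3, fderiv ℝ F y (Pi.single i 1) k * u (F y) k)
      (∑ k ∈ Finset.univ, (fderiv ℝ F x (Pi.single i 1) k • C2 k + u (F x) k • C1 k)) x :=
    HasFDerivAt.fun_sum (fun k _ => (h1 k).mul (h2 k))
  rw [pderiv3, hfun, H.fderiv]
  rw [ContinuousLinearMap.sum_apply]
  simp only [ContinuousLinearMap.add_apply, ContinuousLinearMap.smul_apply, smul_eq_mul]
  rw [Finset.sum_add_distrib, add_comm]
  congr 1
  · apply Finset.sum_congr rfl
    intro k _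
    rw [fderiv_entry_eq F hF x i k]
    ring
  · apply Finset.sum_congr rfl
    intro k _
    simp only [C2, ContinuousLinearMap.comp_apply, ContinuousLinearMap.proj_apply]
    rw [clm_apply_eq_sum (fderiv ℝ u (F x)) (fderiv ℝ F x (Pi.single j 1)) k, Finset.mul_sum]
    apply Finset.sum_congr rfl
    intro l _
    ring


lemma pderiv3_comp (u : E3 → E3) (hu : ContDiff ℝ 1 u) (z : E3) (c l : Fin 3) :
    pderiv3 (fun y => u y c) l z = fderiv ℝ u z (Pi.single l 1) c := by
  have h : HasFDerivAt (fun y => u y c)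
      ((ContinuousLinearMap.proj (R := ℝ) (φ := fun _ : Fin 3 => ℝ) c).comp (fderiv ℝ u z)) z := by
    exact
      ((ContinuousLinearMap.proj (R := ℝ) (φ := fun _ : Fin 3 => ℝ) c).hasFDerivAt.comp z
        ((hu.differentiable (by norm_num) z).hasFDerivAt))
  rw [pderiv3, h.fderiv]
  simp

set_option maxHeartbeats 1600000 in
lemma piola3 (F : E3 → E3) (hF : ContDiff ℝ 2 F) (u : E3 → E3) (hu : ContDiff ℝ 1 u)
    (uhat : E3 → E3) (huhat : ∀ x, uhat x = (jacobian3 F x).transpose.mulVec (u (F x)))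
    (x : E3) :
    (jacobian3 F x).mulVec (curl3 uhat x) = (jacobian3 F x).det • curl3 u (F x) := by
  refine funext fun a => ?_
  fin_cases a
  · show (jacobian3 F x).mulVec (curl3 uhat x) 0 = ((jacobian3 F x).det • curl3 u (F x)) 0
    simp only [Matrix.mulVec, dotProduct, Fin.sum_univ_three, jacobian3, Matrix.of_apply,
      Matrix.det_fin_three, curl3, Matrix.cons_val_zero, Matrix.cons_val_one, Matrix.head_cons,
      Matrix.cons_val_two, Matrix.tail_cons, Pi.smul_apply, smul_eq_mul,
      pderiv3_uhat F hF u hu uhat huhat x, pderiv3_comp u hu (F x), Fin.sum_univ_three]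
    rw [sderiv_symm F hF x 2 1 0, sderiv_symm F hF x 2 1 1, sderiv_symm F hF x 2 1 2,
        sderiv_symm F hF x 2 0 0, sderiv_symm F hF x 2 0 1, sderiv_symm F hF x 2 0 2,
        sderiv_symm F hF x 1 0 0, sderiv_symm F hF x 1 0 1, sderiv_symm F hF x 1 0 2]
    ring
  · show (jacobian3 F x).mulVec (curl3 uhat x) 1 = ((jacobian3 F x).det • curl3 u (F x)) 1
    simp only [Matrix.mulVec, dotProduct, Fin.sum_univ_three, jacobian3, Matrix.of_apply,
      Matrix.det_fin_three, curl3, Matrix.cons_val_zero, Matrix.cons_val_one, Matrix.head_cons,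
      Matrix.cons_val_two, Matrix.tail_cons, Pi.smul_apply, smul_eq_mul,
      pderiv3_uhat F hF u hu uhat huhat x, pderiv3_comp u hu (F x), Fin.sum_univ_three]
    rw [sderiv_symm F hF x 2 1 0, sderiv_symm F hF x 2 1 1, sderiv_symm F hF x 2 1 2,
        sderiv_symm F hF x 2 0 0, sderiv_symm F hF x 2 0 1, sderiv_symm F hF x 2 0 2,
        sderiv_symm F hF x 1 0 0, sderiv_symm F hF x 1 0 1, sderiv_symm F hF x 1 0 2]
    ring
  · show (jacobian3 F x).mulVec (curl3 uhat x) 2 = ((jacobian3 F x).det • curl3 u (F x)) 2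
    simp only [Matrix.mulVec, dotProduct, Fin.sum_univ_three, jacobian3, Matrix.of_apply,
      Matrix.det_fin_three, curl3, Matrix.cons_val_zero, Matrix.cons_val_one, Matrix.head_cons,
      Matrix.cons_val_two, Matrix.tail_cons, Pi.smul_apply, smul_eq_mul,
      pderiv3_uhat F hF u hu uhat huhat x, pderiv3_comp u hu (F x), Fin.sum_univ_three]
    rw [sderiv_symm F hF x 2 1 0, sderiv_symm F hF x 2 1 1, sderiv_symm F hF x 2 1 2,
        sderiv_symm F hF x 2 0 0, sderiv_symm F hF x 2 0 1, sderiv_symm F hF x 2 0 2,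
        sderiv_symm F hF x 1 0 0, sderiv_symm F hF x 1 0 1, sderiv_symm F hF x 1 0 2]
    ring

/-- Transformation of the curl-curl form under the covariant Piola mapping in 3D:
∫_{F(Ω̂)} ⟨∇×u, ∇×v⟩ dx = ∫_{Ω̂} (1/det DF) ⟨DF ∇×û, DF ∇×v̂⟩ dx̂. -/
theorem piola_curl_integral_transform_3d
    (Ω : Set (Fin 3 → ℝ)) (hΩ : MeasurableSet Ω)
    (F : (Fin 3 → ℝ) → (Fin 3 → ℝ)) (hF : ContDiff ℝ 2 F)
    (hinj : Set.InjOn F Ω)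
    (hdet : ∀ x ∈ Ω, 0 < (jacobian3 F x).det)
    (u v : (Fin 3 → ℝ) → (Fin 3 → ℝ))
    (hu : ContDiff ℝ 1 u) (hv : ContDiff ℝ 1 v)
    (uhat vhat : (Fin 3 → ℝ) → (Fin 3 → ℝ))
    (huhat : ∀ x : Fin 3 → ℝ, uhat x = (jacobian3 F x).transpose.mulVec (u (F x)))
    (hvhat : ∀ x : Fin 3 → ℝ, vhat x = (jacobian3 F x).transpose.mulVec (v (F x))) :
    ∫ x in F '' Ω, dotProduct (curl3 u x) (curl3 v x) =
      ∫ x in Ω, (1 / (jacobian3 F x).det) *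
        dotProduct ((jacobian3 F x).mulVec (curl3 uhat x))
          ((jacobian3 F x).mulVec (curl3 vhat x)) := by
  have hdF : ∀ x ∈ Ω, HasFDerivWithinAt F (fderiv ℝ F x) Ω x := fun x _ =>
    ((hF.differentiable (by norm_num)) x).hasFDerivAt.hasFDerivWithinAt
  have hdet' : ∀ x : E3, (fderiv ℝ F x : E3 →L[ℝ] E3).det = (jacobian3 F x).det := by
    intro x
    have hm : LinearMap.toMatrix' ((fderiv ℝ F x : E3 →L[ℝ] E3) : E3 →ₗ[ℝ] E3)
        = jacobian3 F x := by
      ext i j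
      rw [LinearMap.toMatrix'_apply]
      have : (fun j' => if j' = j then (1:ℝ) else 0) = Pi.single j 1 := by
        funext j'; simp [Pi.single_apply]
      simp [jacobian3, this]
    rw [ContinuousLinearMap.det, ← LinearMap.det_toMatrix', hm]
  rw [integral_image_eq_integral_abs_det_fderiv_smul volume hΩ hdF hinj]
  apply setIntegral_congr_fun hΩ
  intro x hx
  have hd := hdet x hx
  simp only []
  rw [piola3 F hF u hu uhat huhat x, piola3 F hF v hv vhat hvhat x,
    smul_dotProduct, dotProduct_smul, hdet' x, abs_of_pos hd]
  simp only [smul_eq_mul]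
  field_simp
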